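/- Let n > 3 and let ζ be a gain function on the complete graph K_n. Then (K_n,ζ) is a gain-line graph (with parameter s) if and only if ζ is switching equivalent to the constant gain function 𝐬. -/

import Mathlib

open SimpleGraph

/-- `ψ` is a gain function on `Γ`: on adjacent ordered pairs, reversing the
orientation inverts the gain. -/
def IsGainFun {V G : Type} [Group G] (Γ : SimpleGraph V) (ψ : V → V → G) : Prop :=
  ∀ ⦃u v : V⦄, Γ.Adj u v → ψ v u = (ψ u v)⁻¹

/-- Two gain functions on `Γ` are switching equivalent. -/
def SwitchingEquiv {V G : Type} [Group G] (Γ : SimpleGraph V) (ψ₁ ψ₂ : V → V → G) : Prop :=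
  ∃ f : V → G, ∀ ⦃u v : V⦄, Γ.Adj u v → ψ₂ u v = (f u)⁻¹ * ψ₁ u v * f v

/-- A `G`-phase of `Γ`: a choice of a group element for every incident
(vertex, edge) pair (the non-incident entries of the phase matrix are `0`,
so they carry no data). -/
def GPhase {V : Type} (Γ : SimpleGraph V) (G : Type) : Type :=
  ∀ (v : V) (e : Γ.edgeSet), v ∈ (e : Sym2 V) → G

/-- `Ψ(H) = ψ`: the gain function associated with the phase `H` (with parameter `s₁`)
is `ψ`, i.e. `ψ(u,v) = s₁ · H(u,e) · H(v,e)⁻¹` for `e = {u,v}`. -/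
def PsiEq {V G : Type} [Group G] {Γ : SimpleGraph V} (s₁ : G) (H : GPhase Γ G)
    (ψ : V → V → G) : Prop :=
  ∀ ⦃u v : V⦄ (h : Γ.Adj u v),
    ψ u v = s₁ * H u ⟨s(u, v), h⟩ (Sym2.mem_mk_left u v)
      * (H v ⟨s(u, v), h⟩ (Sym2.mem_mk_right u v))⁻¹

/-- `Ψ_L(H) = ζ`: the gain function on the line graph associated with the phase `H`
(with parameter `s`) is `ζ`, i.e. `ζ(e_p,e_q) = s · H(w,e_p)⁻¹ · H(w,e_q)` whenever
`w` is a common endpoint of the distinct edges `e_p, e_q`. -/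
def PsiLEq {V G : Type} [Group G] {Γ : SimpleGraph V} (s : G) (H : GPhase Γ G)
    (ζ : Γ.edgeSet → Γ.edgeSet → G) : Prop :=
  ∀ (p q : Γ.edgeSet) (w : V) (hp : w ∈ (p : Sym2 V)) (hq : w ∈ (q : Sym2 V)), p ≠ q →
    ζ p q = s * (H w p hp)⁻¹ * H w q hq

/-- `(L, ζ)` is a gain-line graph (with parameter `s`): there are a graph `Γ`
with `L = L(Γ)` (up to isomorphism) and a `G`-phase `H` of `Γ` with `Ψ_L(H) = ζ`. -/
def IsGainLine {VL G : Type} [Group G] (s : G) (L : SimpleGraph VL) (ζ : VL → VL → G) : Prop :=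
  ∃ (V' : Type) (Γ : SimpleGraph V') (φ : L ≃g Γ.lineGraph) (H : GPhase Γ G),
    PsiLEq s H fun p q => ζ (φ.symm p) (φ.symm q)
/-- The star graph: center `none`, leaves `some i`. -/
def starG (n : ℕ) : SimpleGraph (Option (Fin n)) where
  Adj x y := x ≠ y ∧ (x = none ∨ y = none)
  symm := ⟨fun x y (h : x ≠ y ∧ (x = none ∨ y = none)) => ⟨h.1.symm, h.2.symm⟩⟩
  loopless := ⟨fun x (h : x ≠ x ∧ (x = none ∨ x = none)) => h.1 rfl⟩

def starEdge {n : ℕ} (i : Fin n) : (starG n).edgeSet :=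
  ⟨s(none, some i), by simp [SimpleGraph.mem_edgeSet, starG]⟩

lemma starEdge_inj {n : ℕ} : Function.Injective (starEdge (n := n)) := by
  intro i j h
  have h2 : (s(none, some i) : Sym2 (Option (Fin n))) = s(none, some j) :=
    congrArg Subtype.val h
  simpa [Sym2.eq_iff] using h2

lemma starEdge_surj {n : ℕ} : Function.Surjective (starEdge (n := n)) := by
  rintro ⟨e, he⟩
  induction e using Sym2.ind with
  | _ x y =>
    rw [SimpleGraph.mem_edgeSet] at he
    obtain ⟨hxy, h | h⟩ := he
    · subst h
      obtain ⟨i, rfl⟩ := Option.ne_none_iff_exists'.mp (Ne.symm hxy)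
      exact ⟨i, rfl⟩
    · subst h
      obtain ⟨i, rfl⟩ := Option.ne_none_iff_exists'.mp hxy
      exact ⟨i, Subtype.ext Sym2.eq_swap⟩

noncomputable def starEquiv (n : ℕ) : Fin n ≃ (starG n).edgeSet :=
  Equiv.ofBijective _ ⟨starEdge_inj, starEdge_surj⟩

lemma starEquiv_apply {n : ℕ} (i : Fin n) : starEquiv n i = starEdge i := rfl

lemma none_mem_starEdge {n : ℕ} (i : Fin n) :
    (none : Option (Fin n)) ∈ ((starEdge i : (starG n).edgeSet) : Sym2 (Option (Fin n))) :=
  Sym2.mem_mk_left _ _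

noncomputable def starIso (n : ℕ) : (⊤ : SimpleGraph (Fin n)) ≃g (starG n).lineGraph where
  toEquiv := starEquiv n
  map_rel_iff' := by
    intro i j
    rw [SimpleGraph.lineGraph_adj_iff_exists]
    constructor
    · rintro ⟨hne, -⟩
      simp only [SimpleGraph.top_adj]
      exact fun h => hne (congrArg _ h)
    · intro h
      have hij : i ≠ j := by simpa using h
      exact ⟨fun hc => hij ((starEquiv n).injective hc),
        none, none_mem_starEdge i, none_mem_starEdge j⟩

lemma starG_common {n : ℕ} (p q : (starG n).edgeSet) (hpq : p ≠ q) (w : Option (Fin n))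
    (hp : w ∈ (p : Sym2 (Option (Fin n)))) (hq : w ∈ (q : Sym2 (Option (Fin n)))) :
    w = none := by
  obtain ⟨i, rfl⟩ := starEdge_surj p
  obtain ⟨j, rfl⟩ := starEdge_surj q
  have hij : i ≠ j := fun h => hpq (by rw [h])
  rw [show ((starEdge i : (starG n).edgeSet) : Sym2 (Option (Fin n))) = s(none, some i)
    from rfl, Sym2.mem_iff] at hp
  rw [show ((starEdge j : (starG n).edgeSet) : Sym2 (Option (Fin n))) = s(none, some j)
    from rfl, Sym2.mem_iff] at hq
  rcases hp with rfl | rfl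
  · rfl
  · rcases hq with h | h
    · exact h
    · exact absurd (Option.some_injective _ h) hij

/-- `(K_n, ζ)`, `n > 3`, is a gain-line graph if and only if `ζ ∼ 𝐬` (Remark 2.14 and
part of Eq. (3.3)). -/
theorem completeGraph_gainLine_iff
    {G : Type} [Group G] (n : ℕ) (hn : 3 < n)
    (s : G) (hs : s * s = 1) (hsc : ∀ g : G, s * g = g * s)
    (ζ : Fin n → Fin n → G) (hζ : IsGainFun (⊤ : SimpleGraph (Fin n)) ζ) :
    IsGainLine s (⊤ : SimpleGraph (Fin n)) ζ ↔
      SwitchingEquiv (⊤ : SimpleGraph (Fin n)) ζ (fun _ _ => s) := by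
  constructor
  · rintro ⟨V', Γ, φ, H, hH⟩
    have hadj : ∀ ⦃i j : Fin n⦄, i ≠ j → Γ.lineGraph.Adj (φ i) (φ j) := by
      intro i j h
      exact φ.map_rel_iff.mpr (by simpa using h)
    have hφne : ∀ ⦃i j : Fin n⦄, i ≠ j → φ i ≠ φ j := fun i j h hc => h (φ.injective hc)
    set i0 : Fin n := ⟨0, by omega⟩ with hi0
    set i1 : Fin n := ⟨1, by omega⟩ with hi1
    set i2 : Fin n := ⟨2, by omega⟩ with hi2
    set i3 : Fin n := ⟨3, by omega⟩ with hi3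
    have h01 : i0 ≠ i1 := by simp [hi0, hi1, Fin.ext_iff]
    have h20 : i2 ≠ i0 := by simp [hi2, hi0, Fin.ext_iff]
    have h21 : i2 ≠ i1 := by simp [hi2, hi1, Fin.ext_iff]
    have h30 : i3 ≠ i0 := by simp [hi3, hi0, Fin.ext_iff]
    have h31 : i3 ≠ i1 := by simp [hi3, hi1, Fin.ext_iff]
    have h32 : i3 ≠ i2 := by simp [hi3, hi2, Fin.ext_iff]
    obtain ⟨-, w, hw0, hw1⟩ := lineGraph_adj_iff_exists.mp (hadj h01)
    have hwall : ∀ i : Fin n, w ∈ ((φ i : Γ.edgeSet) : Sym2 V') := by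
      by_contra hcon
      push_neg at hcon
      obtain ⟨u, hu⟩ := hcon
      have hu0 : u ≠ i0 := fun h => hu (h ▸ hw0)
      have hu1 : u ≠ i1 := fun h => hu (h ▸ hw1)
      obtain ⟨-, a, hau, ha0⟩ := lineGraph_adj_iff_exists.mp (hadj hu0)
      obtain ⟨-, b, hbu, hb1⟩ := lineGraph_adj_iff_exists.mp (hadj hu1)
      have haw : w ≠ a := fun h => hu (h ▸ hau)
      have hbw : w ≠ b := fun h => hu (h ▸ hbu)
      have he0 : ((φ i0 : Γ.edgeSet) : Sym2 V') = s(w, a) :=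
        (Sym2.mem_and_mem_iff haw).mp ⟨hw0, ha0⟩
      have he1 : ((φ i1 : Γ.edgeSet) : Sym2 V') = s(w, b) :=
        (Sym2.mem_and_mem_iff hbw).mp ⟨hw1, hb1⟩
      have hab : a ≠ b := by
        intro h
        subst h
        exact hφne h01 (Subtype.ext (he0.trans he1.symm))
      have heu : ((φ u : Γ.edgeSet) : Sym2 V') = s(a, b) :=
        (Sym2.mem_and_mem_iff hab).mp ⟨hau, hbu⟩
      have key : ∀ v : Fin n, v ≠ u → v ≠ i0 → v ≠ i1 → False := by
        intro v hvu hv0 hv1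
        by_cases hwv : w ∈ ((φ v : Γ.edgeSet) : Sym2 V')
        · obtain ⟨-, c, hcv, hcu⟩ := lineGraph_adj_iff_exists.mp (hadj hvu)
          rw [heu, Sym2.mem_iff] at hcu
          rcases hcu with rfl | rfl
          · exact hv0 (φ.injective (Subtype.ext
              (((Sym2.mem_and_mem_iff haw).mp ⟨hwv, hcv⟩).trans he0.symm)))
          · exact hv1 (φ.injective (Subtype.ext
              (((Sym2.mem_and_mem_iff hbw).mp ⟨hwv, hcv⟩).trans he1.symm)))
        · obtain ⟨-, a', ha'v, ha'0⟩ := lineGraph_adj_iff_exists.mp (hadj hv0)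
          obtain ⟨-, b', hb'v, hb'1⟩ := lineGraph_adj_iff_exists.mp (hadj hv1)
          have haa : a' = a := by
            rw [he0, Sym2.mem_iff] at ha'0
            rcases ha'0 with rfl | rfl
            · exact absurd ha'v hwv
            · rfl
          have hbb : b' = b := by
            rw [he1, Sym2.mem_iff] at hb'1
            rcases hb'1 with rfl | rfl
            · exact absurd hb'v hwv
            · rfl
          have hev : ((φ v : Γ.edgeSet) : Sym2 V') = s(a, b) :=
            (Sym2.mem_and_mem_iff hab).mp ⟨haa ▸ ha'v, hbb ▸ hb'v⟩
          exact hvu (φ.injective (Subtype.ext (hev.trans heu.symm)))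
      by_cases h2 : u = i2
      · exact key i3 (h2 ▸ h32) h30 h31
      · exact key i2 (fun h => h2 h.symm) h20 h21
    refine ⟨fun i => (H w (φ i) (hwall i))⁻¹, ?_⟩
    intro u v huv
    have huv' : u ≠ v := by simpa using huv
    have hval := hH (φ u) (φ v) w (hwall u) (hwall v) (hφne huv')
    simp only [RelIso.symm_apply_apply] at hval
    show s = ((H w (φ u) (hwall u))⁻¹)⁻¹ * ζ u v * (H w (φ v) (hwall v))⁻¹
    rw [hval, inv_inv, hsc]
    group
  · rintro ⟨f, hf⟩
    refine ⟨Option (Fin n), starG n, starIso n, fun v e _ =>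
      match v with
      | none => (f ((starEquiv n).symm e))⁻¹
      | some _ => 1, ?_⟩
    intro p q w hp hq hpq
    have hw : w = none := starG_common p q hpq w hp hq
    subst hw
    have hij : (starEquiv n).symm p ≠ (starEquiv n).symm q := by
      intro h
      exact hpq (by simpa using congrArg (starEquiv n) h)
    have hadj : (⊤ : SimpleGraph (Fin n)).Adj ((starEquiv n).symm p) ((starEquiv n).symm q) := by
      simpa using hij
    have hval : s = (f ((starEquiv n).symm p))⁻¹ * ζ ((starEquiv n).symm p) ((starEquiv n).symm q)
        * f ((starEquiv n).symm q) := hf hadj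
    show ζ ((starEquiv n).symm p) ((starEquiv n).symm q)
      = s * ((f ((starEquiv n).symm p))⁻¹)⁻¹ * (f ((starEquiv n).symm q))⁻¹
    have h2 : ζ ((starEquiv n).symm p) ((starEquiv n).symm q)
        = f ((starEquiv n).symm p) * s * (f ((starEquiv n).symm q))⁻¹ := by
      rw [hval]
      group
    rw [h2, inv_inv, hsc]
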